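/- Let (w,u,v) be a canonically ordered triangle of G (so wu ≼ wv ≼ uv), let t be the position of the edge uv in the stream σ, and let s_1 < t and s_2 < t be the positions of wu and wv respectively. Let f(1), …, f(m) be independent {0,1}-valued random variables with P(f(j) = 1) = 1/k for each j, where k ≥ 1. Let A = { j : s_1 < j < t and σ_j is incident to u } and B = { j : s_2 < j < t and σ_j is incident to v }. Then A and B are disjoint, |A| = degb(wuv), |B| = degb(wvu), and P( f(j) = 0 for all j ∈ A ∪ B ) = (1 − 1/k)^{degb(wuv) + degb(wvu)}. -/

import Mathlib

open MeasureTheory ProbabilityTheory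

/-- The (0-indexed) position of the edge `e` in the stream `σ`; junk value `0` if `e` does
not occur.  When `σ` is injective this is the unique `i` with `σ i = e`. -/
noncomputable def pos {V : Type*} [DecidableEq V] {m : ℕ} (σ : Fin m → Sym2 V) (e : Sym2 V) : ℕ :=
  if h : ∃ i, σ i = e then (h.choose : ℕ) else 0

/-- `degb σ u v w` is the number of edges incident to `v` arriving strictly between the
edges `uv` and `vw` in the stream `σ`. -/
noncomputable def degb {V : Type*} [DecidableEq V] {m : ℕ}
    (σ : Fin m → Sym2 V) (u v w : V) : ℕ :=
  (Finset.univ.filter (fun t : Fin m =>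
    pos σ s(u, v) < (t : ℕ) ∧ (t : ℕ) < pos σ s(v, w) ∧ v ∈ σ t)).card

/-- The degree of the vertex `v` in the streamed graph: the number of stream edges
incident to `v`. -/
def vdeg {V : Type*} [DecidableEq V] {m : ℕ} (σ : Fin m → Sym2 V) (v : V) : ℕ :=
  (Finset.univ.filter (fun t : Fin m => v ∈ σ t)).card

/-- `(u, v, w)` is a canonically ordered triangle of the streamed graph if the edges
`uv`, `uw`, `vw` all occur in the stream and `uv ≼ uw ≼ vw`. -/
def IsCanonTri {V : Type*} [DecidableEq V] {m : ℕ} (σ : Fin m → Sym2 V) (u v w : V) : Prop :=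
  s(u, v) ∈ Set.range σ ∧ s(u, w) ∈ Set.range σ ∧ s(v, w) ∈ Set.range σ ∧
    pos σ s(u, v) ≤ pos σ s(u, w) ∧ pos σ s(u, w) ≤ pos σ s(v, w)

/-- For a canonically ordered triangle `(w,u,v)` and independent Bernoulli(1/k) variables
`f 1, …, f m`: the index sets `A` (edges incident to `u` strictly between `wu` and `uv`) and
`B` (edges incident to `v` strictly between `wv` and `uv`) are disjoint, of sizes
`degb(wuv)` and `degb(wvu)`, and the probability that `f` vanishes on all of `A ∪ B` is
`(1 − 1/k)^{degb(wuv) + degb(wvu)}`. -/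
lemma pos_apply {V : Type*} [DecidableEq V] {m : ℕ} {σ : Fin m → Sym2 V}
    (hinj : Function.Injective σ) (j : Fin m) : pos σ (σ j) = (j : ℕ) := by
  have h : ∃ i, σ i = σ j := ⟨j, rfl⟩
  rw [pos, dif_pos h]
  exact congrArg _ (hinj h.choose_spec)

theorem stmt_11 {V : Type*} [Fintype V] [DecidableEq V] {m : ℕ} (σ : Fin m → Sym2 V)
    (hinj : Function.Injective σ) (hsimple : ∀ t, ¬(σ t).IsDiag)
    (w u v : V) (hcanon : IsCanonTri σ w u v)
    (k : ℝ) (hk : 1 ≤ k)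
    {Ω : Type*} [MeasurableSpace Ω] (μ : Measure Ω) [IsProbabilityMeasure μ]
    (f : Fin m → Ω → Bool) (hmeas : ∀ j, Measurable (f j))
    (hindep : iIndepFun f μ)
    (hp : ∀ j, μ {ω | f j ω = true} = ENNReal.ofReal (1 / k))
    (A B : Finset (Fin m))
    (hA : A = Finset.univ.filter (fun j : Fin m =>
      pos σ s(w, u) < (j : ℕ) ∧ (j : ℕ) < pos σ s(u, v) ∧ u ∈ σ j))
    (hB : B = Finset.univ.filter (fun j : Fin m =>
      pos σ s(w, v) < (j : ℕ) ∧ (j : ℕ) < pos σ s(u, v) ∧ v ∈ σ j)) :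
    Disjoint A B ∧ A.card = degb σ w u v ∧ B.card = degb σ w v u ∧
    μ {ω | ∀ j ∈ A ∪ B, f j ω = false} =
      ENNReal.ofReal ((1 - 1 / k) ^ (degb σ w u v + degb σ w v u)) := by

  -- u ≠ v
  obtain ⟨-, -, ⟨iuv, hiuv⟩, -, -⟩ := hcanon
  have huv : u ≠ v := by
    intro h
    exact hsimple iuv (by rw [hiuv, ← h]; exact Sym2.mk_isDiag_iff.mpr rfl)
  have hdisj : Disjoint A B := by
    rw [Finset.disjoint_left]
    intro j hjA hjB
    rw [hA, Finset.mem_filter] at hjA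
    rw [hB, Finset.mem_filter] at hjB
    have hse : σ j = s(u, v) := (Sym2.mem_and_mem_iff huv).mp ⟨hjA.2.2.2, hjB.2.2.2⟩
    have : pos σ s(u, v) = (j : ℕ) := by rw [← hse, pos_apply hinj]
    exact lt_irrefl _ (this ▸ hjA.2.2.1)
  have hAc : A.card = degb σ w u v := by rw [hA, degb]
  have hBc : B.card = degb σ w v u := by rw [hB, degb, @Sym2.eq_swap _ v u]
  refine ⟨hdisj, hAc, hBc, ?_⟩
  have hk0 : 0 < k := lt_of_lt_of_le one_pos hk
  have h1k : 1 / k ≤ 1 := div_le_one_of_le₀ hk hk0.le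
  have h1k0 : 0 ≤ 1 / k := by positivity
  have hseteq : {ω | ∀ j ∈ A ∪ B, f j ω = false} =
      ⋂ j ∈ (A ∪ B : Finset (Fin m)), (f j ⁻¹' {false}) := by
    ext ω; simp [Set.mem_iInter]
  have hmeasj : ∀ j : Fin m, j ∈ A ∪ B →
      MeasurableSet[MeasurableSpace.comap (f j) inferInstance] (f j ⁻¹' {false}) :=
    fun j _ => ⟨{false}, trivial, rfl⟩
  have hfalse : ∀ j : Fin m, μ (f j ⁻¹' {false}) = ENNReal.ofReal (1 - 1 / k) := by
    intro j
    have hc : (f j ⁻¹' {false}) = {ω | f j ω = true}ᶜ := by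
      ext ω
      simp only [Set.mem_preimage, Set.mem_singleton_iff, Set.mem_compl_iff,
        Set.mem_setOf_eq, Bool.not_eq_true]
    have hms : MeasurableSet {ω | f j ω = true} := (hmeas j) (measurableSet_singleton true)
    rw [hc, measure_compl hms (measure_ne_top μ _),
      measure_univ, hp j, ENNReal.ofReal_sub _ h1k0, ENNReal.ofReal_one]
  rw [hseteq, hindep.meas_biInter hmeasj]
  calc ∏ j ∈ A ∪ B, μ (f j ⁻¹' {false})
      = ∏ _j ∈ A ∪ B, ENNReal.ofReal (1 - 1 / k) := by
        exact Finset.prod_congr rfl fun j _ => hfalse j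
    _ = ENNReal.ofReal (1 - 1 / k) ^ (A ∪ B).card := Finset.prod_const _
    _ = ENNReal.ofReal ((1 - 1 / k) ^ (degb σ w u v + degb σ w v u)) := by
        rw [Finset.card_union_of_disjoint hdisj, hAc, hBc,
          ← ENNReal.ofReal_pow (by linarith)]
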